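/- Let n ≥ 21 be an integer and let t be a real number with 2.5 < t < 1.21π. Define f_n(t) = 24sin(t/(n+2)) + 2sin(4t/(n+2)) - sin(5t/(n+2)), g_n(t) = 18n·sin(t/(n+2)) - 27sin((n+1)t/(n+2)), and h_n(t) = 9n·sin(t) - 9n·sin((n+1)t/(n+2)). Then f_n(t) ≥ 26.3t/(n+2), g_n(t) > 9t, and h_n(t) ≥ -9t. -/

import Mathlib

open Real


lemma taylor_sin_lower {v : ℝ} (hv : 0 ≤ v) : v - v ^ 3 / 6 ≤ Real.sin v := by
  have hmono : MonotoneOn (fun y : ℝ => Real.sin y - (y - y ^ 3 / 6)) (Set.Ici 0) := by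
    apply monotoneOn_of_deriv_nonneg (convex_Ici 0)
    · fun_prop
    · fun_prop
    · intro y _
      have hd : HasDerivAt (fun y : ℝ => Real.sin y - (y - y ^ 3 / 6))
          (Real.cos y - (1 - 3 * y ^ 2 / 6)) y := by
        have h1 : HasDerivAt (fun y : ℝ => y - y ^ 3 / 6) (1 - 3 * y ^ 2 / 6) y := by
          simpa using (hasDerivAt_id y).fun_sub ((hasDerivAt_pow 3 y).div_const 6)
        exact (Real.hasDerivAt_sin y).sub h1
      rw [hd.deriv]
      nlinarith [Real.one_sub_sq_div_two_le_cos (x := y)]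
  have := hmono (Set.self_mem_Ici) (Set.mem_Ici.2 hv) hv
  simp at this
  linarith

lemma taylor_cos_upper {v : ℝ} (hv : 0 ≤ v) : Real.cos v ≤ 1 - v ^ 2 / 2 + v ^ 4 / 24 := by
  have hmono : MonotoneOn (fun y : ℝ => (1 - y ^ 2 / 2 + y ^ 4 / 24) - Real.cos y) (Set.Ici 0) := by
    apply monotoneOn_of_deriv_nonneg (convex_Ici 0)
    · fun_prop
    · fun_prop
    · intro y hy
      rw [interior_Ici] at hy
      have hd : HasDerivAt (fun y : ℝ => (1 - y ^ 2 / 2 + y ^ 4 / 24) - Real.cos y)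
          ((0 - 2 * y / 2 + 4 * y ^ 3 / 24) - (-Real.sin y)) y := by
        have h1 : HasDerivAt (fun y : ℝ => 1 - y ^ 2 / 2 + y ^ 4 / 24)
            (0 - 2 * y / 2 + 4 * y ^ 3 / 24) y := by
          simpa using ((hasDerivAt_const y (1:ℝ)).fun_sub ((hasDerivAt_pow 2 y).div_const 2)).fun_add
            ((hasDerivAt_pow 4 y).div_const 24)
        exact h1.sub (Real.hasDerivAt_cos y)
      rw [hd.deriv]
      have := taylor_sin_lower (le_of_lt hy)
      nlinarith
  have := hmono (Set.self_mem_Ici) (Set.mem_Ici.2 hv) hv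
  simp at this
  linarith

lemma taylor_sin_upper {v : ℝ} (hv : 0 ≤ v) : Real.sin v ≤ v - v ^ 3 / 6 + v ^ 5 / 120 := by
  have hmono : MonotoneOn (fun y : ℝ => (y - y ^ 3 / 6 + y ^ 5 / 120) - Real.sin y) (Set.Ici 0) := by
    apply monotoneOn_of_deriv_nonneg (convex_Ici 0)
    · fun_prop
    · fun_prop
    · intro y hy
      rw [interior_Ici] at hy
      have hd : HasDerivAt (fun y : ℝ => (y - y ^ 3 / 6 + y ^ 5 / 120) - Real.sin y)
          ((1 - 3 * y ^ 2 / 6 + 5 * y ^ 4 / 120) - Real.cos y) y := by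
        have h1 : HasDerivAt (fun y : ℝ => y - y ^ 3 / 6 + y ^ 5 / 120)
            (1 - 3 * y ^ 2 / 6 + 5 * y ^ 4 / 120) y := by
          simpa using ((hasDerivAt_id y).fun_sub ((hasDerivAt_pow 3 y).div_const 6)).fun_add
            ((hasDerivAt_pow 5 y).div_const 120)
        exact h1.sub (Real.hasDerivAt_sin y)
      rw [hd.deriv]
      have := taylor_cos_upper (le_of_lt hy)
      nlinarith
  have := hmono (Set.self_mem_Ici) (Set.mem_Ici.2 hv) hv
  simp at this
  linarith




set_option maxHeartbeats 1000000 in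
theorem stmt_18 (n : ℕ) (hn : 21 ≤ n) (t : ℝ) (ht : 2.5 < t) (ht' : t < 1.21 * π) :
    26.3 * t / (n + 2) ≤
        24 * Real.sin (t / (n + 2)) + 2 * Real.sin (4 * t / (n + 2))
          - Real.sin (5 * t / (n + 2)) ∧
      9 * t < 18 * n * Real.sin (t / (n + 2)) - 27 * Real.sin ((n + 1) * t / (n + 2)) ∧
      -9 * t ≤ 9 * n * Real.sin t - 9 * n * Real.sin ((n + 1) * t / (n + 2)) := by
  have hm : (21 : ℝ) ≤ (n : ℝ) := by exact_mod_cast hn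
  set m : ℝ := (n : ℝ) with hmdef
  have hπu : π < 3.141593 := Real.pi_lt_d6
  have hπl : 3.141592 < π := Real.pi_gt_d6
  have ht0 : (0:ℝ) < t := by linarith
  have htu : t < 3.80133 := by nlinarith
  have hN : (23:ℝ) ≤ m + 2 := by linarith
  have hN0 : (0:ℝ) < m + 2 := by linarith
  have hx0 : 0 < t / (m + 2) := div_pos ht0 hN0
  have hxle : t / (m + 2) ≤ t / 23 := by gcongr
  have hxu : t / (m + 2) < 0.16528 := by
    refine lt_of_le_of_lt hxle ?_
    rw [div_lt_iff₀ (by norm_num)]; linarith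
  refine ⟨?_, ?_, ?_⟩
  · -- Part 1
    rw [show (4:ℝ) * t / (m+2) = 4 * (t/(m+2)) by ring,
        show (5:ℝ) * t / (m+2) = 5 * (t/(m+2)) by ring,
        show (26.3:ℝ) * t / (m+2) = 26.3 * (t/(m+2)) by ring]
    set x := t / (m+2) with hxdef
    have h1 := taylor_sin_lower hx0.le
    have h4 : (4 * x) - (4 * x) ^ 3 / 6 ≤ Real.sin (4 * x) :=
      taylor_sin_lower (by positivity)
    have h5 : Real.sin (5 * x) ≤ 5 * x := Real.sin_le (by positivity)
    nlinarith [mul_pos hx0 hx0, mul_nonneg (mul_pos hx0 hx0).le hx0.le]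
  · -- Part 2
    have hs := taylor_sin_lower hx0.le
    have hkey : 378/23 * t - 3/529 * t ^ 3 ≤ 18 * m * Real.sin (t / (m+2)) := by
      have hA : 378/23 * t ≤ 18 * m * (t / (m+2)) := by
        rw [mul_div_assoc', le_div_iff₀ hN0]
        nlinarith
      have hB : 18 * m * ((t / (m+2)) ^ 3 / 6) ≤ 3/529 * t ^ 3 := by
        have he : 18 * m * ((t / (m+2)) ^ 3 / 6) = 3 * m * t ^ 3 / (m+2) ^ 3 := by
          field_simp; ring
        have hc : 529 * m ≤ (m+2) ^ 3 := by
          nlinarith [sq_nonneg (m - 21), mul_nonneg (by linarith : (0:ℝ) ≤ m - 21) (sq_nonneg (m - 21)), sq_nonneg m]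
        rw [he, div_le_iff₀ (by positivity)]
        nlinarith [mul_le_mul_of_nonneg_right hc (pow_pos ht0 3).le]
      nlinarith [mul_le_mul_of_nonneg_left hs (by linarith : (0:ℝ) ≤ 18 * m)]
    set a := (m + 1) * t / (m + 2) with hadef
    set b := 22 * t / 23 with hbdef
    have hba : b ≤ a := by
      rw [hadef, hbdef, div_le_div_iff₀ (by norm_num) hN0]
      nlinarith
    have hb_lb : 55/23 ≤ b := by rw [hbdef]; linarith
    have ha_ub : a ≤ t := by
      rw [hadef, div_le_iff₀ hN0]; nlinarith
    have hsab : Real.sin a ≤ Real.sin b := by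
      rw [← Real.cos_sub_pi_div_two a, ← Real.cos_sub_pi_div_two b]
      apply Real.cos_le_cos_of_nonneg_of_le_pi
      · linarith
      · linarith
      · linarith
    have hfin : 27 * Real.sin b < 378/23 * t - 3/529 * t ^ 3 - 9 * t := by
      rcases le_or_gt b π with hbπ | hbπ
      · set v := π - b with hvdef
        have hv0 : 0 ≤ v := by linarith
        have hv1 : v ≤ 0.7504 := by
          have : 55/23 ≤ b := hb_lb
          rw [hvdef]; linarith
        have hq : Real.sin b ≤ v - v ^ 3 / 6 + v ^ 5 / 120 := by
          rw [show b = π - v by rw [hvdef]; ring, Real.sin_pi_sub]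
          exact taylor_sin_upper hv0
        have hq' : Real.sin b ≤ v - 0.1619 * v ^ 3 := by
          nlinarith [mul_nonneg (mul_nonneg hv0 hv0) hv0, sq_nonneg v,
            mul_nonneg (mul_nonneg (mul_nonneg hv0 hv0) hv0) (sub_nonneg.2 hv1),
            mul_nonneg (mul_nonneg (mul_nonneg hv0 hv0) hv0)
              (mul_nonneg (sub_nonneg.2 hv1) (by linarith : (0:ℝ) ≤ v + 0.7504))]
        have hlin : 22 * t + 23 * v = 23 * π := by rw [hvdef, hbdef]; ring
        nlinarith [sq_nonneg v, sq_nonneg (v - 0.7504), sq_nonneg (t - 2.5),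
          mul_nonneg (sub_nonneg.2 ht.le) hv0,
          mul_nonneg (mul_nonneg (sub_nonneg.2 ht.le) hv0) hv0,
          mul_nonneg (sub_nonneg.2 ht.le) (sq_nonneg v),
          mul_nonneg (sub_nonneg.2 ht.le) (sq_nonneg (t - 2.5)),
          mul_nonneg hv0 (sq_nonneg (v - 0.7504))]
      · have hb2π : b ≤ 2 * π := by rw [hbdef]; nlinarith
        have hsb : Real.sin b ≤ 0 := by
          have := Real.sin_nonneg_of_nonneg_of_le_pi (x := b - π) (by linarith) (by linarith)
          rw [Real.sin_sub_pi] at this; linarith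
        nlinarith [mul_nonneg (by linarith : (0:ℝ) ≤ 3.80133 - t) (sq_nonneg t),
          mul_nonneg (by linarith : (0:ℝ) ≤ 3.80133 - t) ht0.le]
    linarith [hsab, hkey, hfin]
  · -- Part 3
    set a := (m + 1) * t / (m + 2) with hadef
    have hta : t - a = t / (m + 2) := by rw [hadef]; field_simp; ring
    have habs : |Real.sin t - Real.sin a| ≤ t - a := by
      rw [Real.sin_sub_sin, abs_mul, abs_mul, abs_two]
      have hb1 := Real.abs_sin_le_abs (x := (t - a) / 2)
      have hb2 := Real.abs_cos_le_one ((t + a) / 2)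
      have hb4 : |(t - a) / 2| = (t - a) / 2 := abs_of_nonneg (by rw [hta]; positivity)
      rw [hb4] at hb1
      nlinarith [abs_nonneg (Real.sin ((t - a) / 2)), abs_nonneg (Real.cos ((t + a) / 2))]
    have h1 : -(t - a) ≤ Real.sin t - Real.sin a := by
      have := (abs_le.mp habs).1; linarith
    have h1' := mul_le_mul_of_nonneg_left h1 (show (0:ℝ) ≤ 9 * m by linarith)
    rw [hta] at h1'
    have h2 : 9 * m * (t / (m+2)) ≤ 9 * t := by
      rw [mul_div_assoc', div_le_iff₀ hN0]; nlinarith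
    nlinarith [h1', h2]
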